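/- Let E be a small regular category with enough regular projectives, and let E_P be its full subcategory of regular projectives. Then the canonical functor E → [E_P^op, Set] (restricted Yoneda) is fully faithful, preserves finite limits and coequalizers of kernel pairs, and factors through the full subcategory 𝖱₁(E_P) of presheaves that are coequalizers of pseudo equivalence relations of representables; in particular every object of E is a coequalizer of a pseudo equivalence relation of projectives. -/

import Mathlib

set_option linter.unusedVariables false

open CategoryTheory CategoryTheory.Limits Opposite

universe w w' v v' u

namespace Paper

/-! ### Weighted (co)limits in the `Set`-enriched case -/

/-- The canonical diagram whose conical colimit computes the `M`-weighted colimit of `H`. -/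
abbrev elemDiagram {C : Type u} [SmallCategory C] (M : Cᵒᵖ ⥤ Type u)
    {A : Type w} [Category.{v} A] (H : C ⥤ A) : M.Elementsᵒᵖ ⥤ A :=
  (CategoryOfElements.π M).leftOp ⋙ H

/-- The `M`-weighted colimit of `H`. -/
noncomputable abbrev wcolim {C : Type u} [SmallCategory C] (M : Cᵒᵖ ⥤ Type u)
    {A : Type w} [Category.{v} A] (H : C ⥤ A) [HasColimit (elemDiagram M H)] : A :=
  colimit (elemDiagram M H)

/-- The functor `M ⋆ (−) : [C, Set] ⥤ Set`. -/
noncomputable def wcolimF {C : Type u} [SmallCategory C] (M : Cᵒᵖ ⥤ Type u) :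
    (C ⥤ Type u) ⥤ Type u :=
  (Functor.whiskeringLeft _ _ _).obj (CategoryOfElements.π M).leftOp ⋙ colim

/-- The functor `(−) ⋆ F : [Bᵒᵖ, Set] ⥤ Set` for a covariant weight `F : B ⥤ Set`. -/
noncomputable def costarF {B : Type u} [SmallCategory B] (F : B ⥤ Type u) :
    (Bᵒᵖ ⥤ Type u) ⥤ Type u :=
  wcolimF (C := Bᵒᵖ) (unopUnop B ⋙ F)

/-! ### Cardinal-indexed smallness, filteredness, flatness, accessibility -/

/-- A small category `D` is `α`-small if it has fewer than `α` arrows. -/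
def AlphaSmall (α : Cardinal.{u}) (D : Type u) [SmallCategory D] : Prop :=
  Cardinal.mk (Arrow D) < α

/-- `α`-filteredness: every `α`-small diagram admits a cocone. -/
def IsAlphaFiltered (α : Cardinal.{u}) (D : Type w) [Category.{v} D] : Prop :=
  ∀ (S : Type u) [iS : SmallCategory S], AlphaSmall α S → ∀ F : S ⥤ D, Nonempty (Cocone F)

/-- `F : B ⥤ Set` is `α`-flat if `(−) ⋆ F` preserves `α`-small limits. -/
def AlphaFlat (α : Cardinal.{u}) {B : Type u} [SmallCategory B] (F : B ⥤ Type u) : Prop :=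
  ∀ (D : Type u) [iD : SmallCategory D], AlphaSmall α D →
    PreservesLimitsOfShape D (costarF F)

/-- An object `X` is `α`-presentable if its hom-functor preserves `α`-filtered colimits. -/
def AlphaPresentable (α : Cardinal.{u}) {A : Type w} [Category.{v} A] (X : A) : Prop :=
  ∀ (D : Type u) [iD : SmallCategory D], IsAlphaFiltered α D →
    PreservesColimitsOfShape D (coyoneda.obj (op X))

/-- A category is `α`-accessible if it has `α`-filtered (= `α`-flat) colimits and is
equivalent to the category of `α`-flat set-valued functors on some small category. -/
def AlphaAccessible (α : Cardinal.{u}) (A : Type w) [Category.{v} A] : Prop :=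
  (∀ (D : Type u) [iD : SmallCategory D], IsAlphaFiltered α D → HasColimitsOfShape D A) ∧
  ∃ B : Cat.{u, u}, Nonempty (A ≌ ObjectProperty.FullSubcategory (fun F : B ⥤ Type u => AlphaFlat α F))

/-- A functor preserves `α`-flat colimits (in the ordinary case, `α`-filtered colimits). -/
def PreservesAlphaFlatColimits (α : Cardinal.{u}) {A : Type w} [Category.{v} A]
    {K : Type w'} [Category.{v'} K] (F : A ⥤ K) : Prop :=
  ∀ (D : Type u) [iD : SmallCategory D], IsAlphaFiltered α D →
    PreservesColimitsOfShape D F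

/-- A functor is `α`-continuous: it preserves `α`-small limits. -/
def AlphaContinuous (α : Cardinal.{u}) {A : Type w} [Category.{v} A]
    {K : Type w'} [Category.{v'} K] (F : A ⥤ K) : Prop :=
  ∀ (D : Type u) [iD : SmallCategory D], AlphaSmall α D → PreservesLimitsOfShape D F

/-! ### Classes of limits -/

/-- A class of limit shapes. -/
def ShapeClass : Type (u + 1) :=
  ∀ (D : Type u), SmallCategory D → Prop

/-- A category has `Ψ`-limits. -/
def PsiComplete (Psi : ShapeClass.{u}) (A : Type w) [Category.{v} A] : Prop :=
  ∀ (D : Type u) [iD : SmallCategory D], Psi D iD → HasLimitsOfShape D A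

/-- A functor is `Ψ`-continuous. -/
def PsiContinuous (Psi : ShapeClass.{u}) {A : Type w} [Category.{v} A]
    {K : Type w'} [Category.{v'} K] (F : A ⥤ K) : Prop :=
  ∀ (D : Type u) [iD : SmallCategory D], Psi D iD → PreservesLimitsOfShape D F

/-! ### Colimit types -/

/-- A colimit type assigns to each weight a replete full subcategory of diagrams. -/
def ColimitType : Type (u + 1) :=
  ∀ (C : Type u) (iC : SmallCategory C), (Cᵒᵖ ⥤ Type u) → Set (C ⥤ Type u)

/-- `(M, H)` is a diagram of type `𝖢` in the functor category `[B, Set]`. -/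
def IsCDiagram (Ct : ColimitType.{u}) {C : Type u} [iC : SmallCategory C]
    (M : Cᵒᵖ ⥤ Type u) {B : Type w} [Category.{u} B] (H : C ⥤ (B ⥤ Type u)) : Prop :=
  ∀ b : B, H ⋙ (evaluation B (Type u)).obj b ∈ Ct C iC M

/-- A subcategory of a functor category is closed under colimits of type `𝖢`. -/
def ClosedUnderC (Ct : ColimitType.{u}) {B : Type w} [Category.{u} B]
    (S : Set (B ⥤ Type u)) : Prop :=
  ∀ (C : Type u) [iC : SmallCategory C] (M : Cᵒᵖ ⥤ Type u) (H : C ⥤ (B ⥤ Type u)),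
    IsCDiagram Ct M H → (∀ c : C, H.obj c ∈ S) → wcolim M H ∈ S

/-- The closure of a family of generators under colimits of type `𝖢` (and isomorphisms). -/
def CClosureIn (Ct : ColimitType.{u}) {B : Type w} [Category.{u} B]
    (gens : Set (B ⥤ Type u)) : Set (B ⥤ Type u) :=
  ⋂₀ {S | gens ⊆ S ∧ (∀ X Y : B ⥤ Type u, Nonempty (X ≅ Y) → X ∈ S → Y ∈ S) ∧
      ClosedUnderC Ct S}

/-- `𝖢A`: the closure of the representables under `𝖢`-colimits inside presheaves on `A`. -/
def CClosure (Ct : ColimitType.{u}) (A : Type w) [Category.{u} A] :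
    Set (Aᵒᵖ ⥤ Type u) :=
  CClosureIn Ct {X | ∃ a : A, Nonempty (X ≅ yoneda.obj a)}

/-- `𝖢(Aᵒᵖ)`: the closure of the corepresentables under `𝖢`-colimits in `[A, Set]`. -/
def CoCClosure (Ct : ColimitType.{u}) (A : Type w) [Category.{u} A] :
    Set (A ⥤ Type u) :=
  CClosureIn Ct {X | ∃ a : A, Nonempty (X ≅ coyoneda.obj (op a))}

/-- The one-step completion `𝖢₁B` of `B` under `𝖢`-colimits of representables. -/
def COneStep (Ct : ColimitType.{u}) (B : Type w) [Category.{u} B] :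
    Set (Bᵒᵖ ⥤ Type u) :=
  {X | (∃ b : B, Nonempty (X ≅ yoneda.obj b)) ∨
    ∃ (C : Cat.{u, u}) (M : (↑C)ᵒᵖ ⥤ Type u) (H : ↑C ⥤ (Bᵒᵖ ⥤ Type u)),
      IsCDiagram Ct M H ∧ (∀ c : ↑C, ∃ b : B, Nonempty (H.obj c ≅ yoneda.obj b)) ∧
      Nonempty (X ≅ wcolim M H)}

/-- The category `𝖢B`. -/
abbrev CCat (Ct : ColimitType.{u}) (B : Type w) [Category.{u} B] :=
  ObjectProperty.FullSubcategory (fun X => X ∈ CClosure Ct B)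

/-- The inclusion `B ⥤ 𝖢B` (corestricted Yoneda). -/
def yonedaC (Ct : ColimitType.{u}) (B : Type w) [Category.{u} B] : B ⥤ CCat Ct B :=
  ObjectProperty.lift _ yoneda (fun b S hS => hS.1 ⟨b, ⟨Iso.refl _⟩⟩)

/-- Compatibility of a colimit type with a class of limits. -/
def Compatible (Psi : ShapeClass.{u}) (Ct : ColimitType.{u}) : Prop :=
  ∀ (C : Type u) [iC : SmallCategory C] (M : Cᵒᵖ ⥤ Type u), (Ct C iC M).Nonempty →
    ∀ (D : Type u) [iD : SmallCategory D], Psi D iD →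
      ∀ S : D ⥤ (C ⥤ Type u), (∀ d : D, S.obj d ∈ Ct C iC M) →
        limit S ∈ Ct C iC M ∧
        Nonempty (IsLimit ((wcolimF M).mapCone (limit.cone S)))

/-- Condition (a): each `𝖢_M` is closed under `α`-flat (= `α`-filtered) colimits. -/
def ConditionA (α : Cardinal.{u}) (Ct : ColimitType.{u}) : Prop :=
  ∀ (C : Type u) [iC : SmallCategory C] (M : Cᵒᵖ ⥤ Type u)
    (D : Type u) [iD : SmallCategory D], IsAlphaFiltered α D →
    ∀ H : D ⥤ (C ⥤ Type u), (∀ d : D, H.obj d ∈ Ct C iC M) →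
      colimit H ∈ Ct C iC M

/-- `A(H−, a)` for `H : Cᵒᵖ ⥤ A`, as a covariant functor `C ⥤ Set`. -/
def homDiagram {C : Type u} [SmallCategory C] {A : Type w} [Category.{u} A]
    (H : Cᵒᵖ ⥤ A) (a : A) : C ⥤ Type u :=
  H.rightOp ⋙ yoneda.obj a

/-- Condition (b): every `Ψ`-continuous `α`-flat-colimit-preserving functor from an
`α`-accessible category with `Ψ`-limits to `Set` is a `𝖢`-colimit of representables
at `α`-presentable objects. -/
def ConditionB (α : Cardinal.{u}) (Psi : ShapeClass.{u}) (Ct : ColimitType.{u}) : Prop :=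
  ∀ (A : Type (u + 1)) [iA : Category.{u} A], AlphaAccessible α A → PsiComplete Psi A →
    ∀ F : A ⥤ Type u, PsiContinuous Psi F → PreservesAlphaFlatColimits α F →
      ∃ (C : Type u) (iC : SmallCategory C) (M : Cᵒᵖ ⥤ Type u) (H : Cᵒᵖ ⥤ A),
        (∀ c : Cᵒᵖ, AlphaPresentable α (H.obj c)) ∧
        (∀ a : A, homDiagram H a ∈ Ct C iC M) ∧
        Nonempty (F ≅ wcolim M (H.rightOp ⋙ coyoneda))

/-! ### 𝖢-virtual limits -/

/-- The presheaf `{M, Y∘H} = [C,Set](M, B(−, H−))`. -/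
@[simps] def virtLim {C : Type u} [SmallCategory C] {B : Type w} [Category.{u} B]
    (M : C ⥤ Type u) (H : C ⥤ B) : Bᵒᵖ ⥤ Type u where
  obj b := M ⟶ H ⋙ coyoneda.obj (op b.unop)
  map {b b'} f := TypeCat.ofHom fun τ => τ ≫ Functor.whiskerLeft H (coyoneda.map f.unop.op)

/-- An `α`-small covariant weight. -/
def AlphaSmallWeight (α : Cardinal.{u}) {C : Type u} [SmallCategory C]
    (M : C ⥤ Type u) : Prop :=
  Cardinal.mk (Arrow C) < α ∧ ∀ c : C, Cardinal.mk (M.obj c) < α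

/-- `B` is `𝖢`-virtually `α`-complete. -/
def CVirtuallyAlphaComplete (Ct : ColimitType.{u}) (α : Cardinal.{u})
    (B : Type w) [Category.{u} B] : Prop :=
  ∀ (C : Type u) [iC : SmallCategory C] (M : C ⥤ Type u) (H : C ⥤ B),
    AlphaSmallWeight α M → virtLim M H ∈ CClosure Ct B

/-- `F : B ⥤ Set` is `𝖢`-virtually `α`-continuous. -/
def CVirtuallyAlphaContinuous (Ct : ColimitType.{u}) (α : Cardinal.{u})
    {B : Type u} [SmallCategory B] (F : B ⥤ Type u) : Prop :=
  ∀ (C : Type u) [iC : SmallCategory C] (M : C ⥤ Type u) (H : C ⥤ B),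
    AlphaSmallWeight α M → virtLim M H ∈ CClosure Ct B →
      Nonempty ((costarF F).obj (virtLim M H) ≃ (M ⟶ H ⋙ F))

/-! ### Diagrams of type 𝖢 in `𝖢B`, 𝖢-cocontinuity, 𝖢-presentability -/

/-- A diagram of type `𝖢` in the category `𝖢B`. -/
def IsCDiagramC (Ct : ColimitType.{u}) {C : Type u} [iC : SmallCategory C]
    (M : Cᵒᵖ ⥤ Type u) {B : Type w} [Category.{u} B] (H : C ⥤ CCat Ct B) : Prop :=
  IsCDiagram Ct M (H ⋙ ObjectProperty.ι _)

/-- A set-valued functor on `𝖢B` is `𝖢`-cocontinuous: it preserves diagrams of type `𝖢`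
as well as their colimits. -/
def CCocontinuousTo (Ct : ColimitType.{u}) {B : Type w} [Category.{u} B]
    (F : CCat Ct B ⥤ Type u) : Prop :=
  ∀ (C : Type u) [iC : SmallCategory C] (M : Cᵒᵖ ⥤ Type u) (H : C ⥤ CCat Ct B),
    IsCDiagramC Ct M H →
      (H ⋙ F) ∈ Ct C iC M ∧
      ∀ c : Cocone (elemDiagram M H), IsColimit c → Nonempty (IsColimit (F.mapCocone c))

/-- A set-valued functor on `𝖢B` preserves colimits of type `𝖢`
(but not necessarily the diagrams themselves). -/
def CColimPreserving (Ct : ColimitType.{u}) {B : Type w} [Category.{u} B]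
    (F : CCat Ct B ⥤ Type u) : Prop :=
  ∀ (C : Type u) [iC : SmallCategory C] (M : Cᵒᵖ ⥤ Type u) (H : C ⥤ CCat Ct B),
    IsCDiagramC Ct M H →
      ∀ c : Cocone (elemDiagram M H), IsColimit c → Nonempty (IsColimit (F.mapCocone c))

/-! ### Regularity, pseudo equivalence relations, exactness -/

/-- A regular projective object. -/
def RegProjective {E : Type w} [Category.{v} E] (P : E) : Prop :=
  ∀ ⦃X Y : E⦄ (e : X ⟶ Y), Nonempty (RegularEpi e) → ∀ g : P ⟶ Y, ∃ f : P ⟶ X, f ≫ e = g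

/-- A pseudo equivalence relation: a pair factoring as a regular epi followed by the
kernel pair of a regular epi. -/
def IsPseudoEqRel {E : Type w} [Category.{v} E] {R P : E} (f g : R ⟶ P) : Prop :=
  ∃ (S : E) (q : R ⟶ S) (h k : S ⟶ P), Nonempty (RegularEpi q) ∧ f = q ≫ h ∧ g = q ≫ k ∧
    ∃ (Z : E) (m : P ⟶ Z), Nonempty (RegularEpi m) ∧ IsKernelPair m h k

/-- `𝖱`-presentable objects: the hom-functor preserves coequalizers of
pseudo equivalence relations. -/
def RPresentable {E : Type w} [Category.{v} E] (X : E) : Prop :=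
  ∀ {R P : E} (f g : R ⟶ P), IsPseudoEqRel f g →
    PreservesColimit (parallelPair f g) (coyoneda.obj (op X))

/-- Enough regular projectives. -/
def EnoughRegProjectives (E : Type w) [Category.{v} E] : Prop :=
  ∀ X : E, ∃ (P : E) (p : P ⟶ X), RegProjective P ∧ Nonempty (RegularEpi p)

/-- An equivalence relation: a jointly monic, reflexive, symmetric, transitive pair. -/
def IsEquivRelPair {E : Type w} [Category.{v} E] [HasFiniteLimits E]
    {R X : E} (f g : R ⟶ X) : Prop :=
  Mono (prod.lift f g) ∧
  (∃ r : X ⟶ R, r ≫ f = 𝟙 X ∧ r ≫ g = 𝟙 X) ∧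
  (∃ s : R ⟶ R, s ≫ f = g ∧ s ≫ g = f) ∧
  (∃ t : pullback g f ⟶ R,
    t ≫ f = pullback.fst g f ≫ f ∧ t ≫ g = pullback.snd g f ≫ g)

/-- Barr-exactness (for a finitely complete category with coequalizers of kernel pairs):
regular epis are stable under pullback and every equivalence relation is a kernel pair. -/
def BarrExact (E : Type w) [Category.{v} E] [HasFiniteLimits E] : Prop :=
  (∀ {X Y Z : E} (e : X ⟶ Y) (g : Z ⟶ Y), Nonempty (RegularEpi e) →
    Nonempty (RegularEpi (pullback.snd e g))) ∧
  (∀ {R X : E} (f g : R ⟶ X), IsEquivRelPair f g →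
    ∃ (Z : E) (m : X ⟶ Z), IsKernelPair m f g)

/-- The closure of the representables under coequalizers of pseudo equivalence relations. -/
def RClosure (B : Type w) [Category.{u} B] : Set (Bᵒᵖ ⥤ Type u) :=
  ⋂₀ {S | (∀ b : B, yoneda.obj b ∈ S) ∧
    (∀ X Y : Bᵒᵖ ⥤ Type u, Nonempty (X ≅ Y) → X ∈ S → Y ∈ S) ∧
    ∀ (R P : Bᵒᵖ ⥤ Type u) (f g : R ⟶ P), IsPseudoEqRel f g → R ∈ S → P ∈ S →
      colimit (parallelPair f g) ∈ S}

/-- The restricted Yoneda embedding into presheaves on the regular projectives. -/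
def restrictedYoneda (E : Type u) [SmallCategory E] :
    E ⥤ ((ObjectProperty.FullSubcategory (RegProjective (E := E)))ᵒᵖ ⥤ Type u) :=
  yoneda ⋙ (Functor.whiskeringLeft _ _ _).obj (ObjectProperty.ι _).op

/-! ### Free groupoid actions -/

/-- The equalizer of `f` and `g` exists and is an initial object. -/
def HasInitialEqualizer {E : Type w} [Category.{v} E] {X Y : E} (f g : X ⟶ Y) : Prop :=
  ∃ c : Fork f g, Nonempty (IsLimit c) ∧ Nonempty (IsInitial c.pt)

/-- A free groupoid action. -/
def FreeAction {G : Type w} [Groupoid.{v} G] {E : Type w'} [Category.{v'} E]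
    (H : G ⥤ E) : Prop :=
  ∀ ⦃x y : G⦄ (g h : x ⟶ y), g ≠ h → HasInitialEqualizer (H.map g) (H.map h)

/-- A weakly-free groupoid action. -/
def WeaklyFreeAction {G : Type w} [Groupoid.{v} G] {E : Type w'} [Category.{v'} E]
    (H : G ⥤ E) : Prop :=
  ∀ ⦃x y : G⦄ (g h : x ⟶ y), H.map g ≠ H.map h → HasInitialEqualizer (H.map g) (H.map h)

/-- A weakly-free action by `ℤ`: an automorphism all of whose non-identity powers
are fixed-point-free. -/
def WeaklyFreeAut {E : Type w} [Category.{v} E] {X : E} (f : Aut X) : Prop :=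
  ∀ n : ℤ, (f ^ n).hom ≠ 𝟙 X → HasInitialEqualizer (f ^ n).hom (𝟙 X)

/-! ### Topos-theoretic notions -/

/-- Lex cocontinuous functors. -/
def LexCocontPred.{u₀, w₀, v₀, w₁, v₁} {A : Type w₀} [Category.{v₀} A] {K : Type w₁} [Category.{v₁} K]
    (F : A ⥤ K) : Prop :=
  PreservesFiniteLimits F ∧
  ∀ (D : Type u₀) [iD : SmallCategory D], PreservesColimitsOfShape D F

/-- Finitary functors: those preserving (small) filtered colimits. -/
def FinitaryPred.{u₀, w₀, v₀, w₁, v₁} {A : Type w₀} [Category.{v₀} A] {K : Type w₁} [Category.{v₁} K]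
    (F : A ⥤ K) : Prop :=
  ∀ (D : Type u₀) [iD : SmallCategory D] [IsFiltered D], PreservesColimitsOfShape D F

/-- Possessing all small filtered colimits. -/
def HasFilteredColimitsP.{u₀, w₀, v₀} (A : Type w₀) [Category.{v₀} A] : Prop :=
  ∀ (D : Type u₀) [iD : SmallCategory D] [IsFiltered D], HasColimitsOfShape D A

/-- A left exact localization of a presheaf category. -/
def IsLexLocalization.{u₀, w₀, v₀} (X : Type w₀) [Category.{v₀} X] : Prop :=
  ∃ (C : Cat.{u₀, u₀}) (J : X ⥤ ((↑C)ᵒᵖ ⥤ Type u₀)) (L : ((↑C)ᵒᵖ ⥤ Type u₀) ⥤ X),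
    Nonempty (L ⊣ J) ∧ J.Full ∧ J.Faithful ∧ PreservesFiniteLimits L

/-- A Grothendieck topos: an accessible left exact localization of a presheaf category. -/
def IsGrothendieckTopos.{u₀, w₀, v₀} (X : Type w₀) [Category.{v₀} X] : Prop :=
  ∃ (C : Cat.{u₀, u₀}) (J : X ⥤ ((↑C)ᵒᵖ ⥤ Type u₀)) (L : ((↑C)ᵒᵖ ⥤ Type u₀) ⥤ X),
    Nonempty (L ⊣ J) ∧ J.Full ∧ J.Faithful ∧ PreservesFiniteLimits L ∧
    ∃ κ : Cardinal.{u₀}, PreservesAlphaFlatColimits κ J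


section Statement19Aux

variable {E : Type u} [SmallCategory E]

/-- In `Type`, a cofork over `Hom(P,-)` of a "covering" epi is a colimit. -/
noncomputable def coyonedaCoforkIsColimit {R X W P : E}
    (f g : R ⟶ X) (π : X ⟶ W) (hre : Nonempty (RegularEpi π)) (hP : RegProjective P)
    (hrel : ∀ x y : P ⟶ X, x ≫ π = y ≫ π → ∃ z : P ⟶ R, z ≫ f = x ∧ z ≫ g = y)
    (w : ((coyoneda.obj (op P)).map f) ≫ (coyoneda.obj (op P)).map π
      = ((coyoneda.obj (op P)).map g) ≫ (coyoneda.obj (op P)).map π) :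
    IsColimit (Cofork.ofπ ((coyoneda.obj (op P)).map π) w) := by
  have key : ∀ (s : Cofork ((coyoneda.obj (op P)).map f) ((coyoneda.obj (op P)).map g))
      (x y : P ⟶ X), x ≫ π = y ≫ π → s.π x = s.π y := by
    intro s x y hxy
    obtain ⟨z, hzf, hzg⟩ := hrel x y hxy
    have := ConcreteCategory.congr_hom s.condition z
    rw [← hzf, ← hzg]
    exact this
  refine Cofork.IsColimit.mk _
    (fun s => TypeCat.ofHom fun v => s.π (Classical.choose (hP π hre v)))
    (fun s => ?_) (fun s m hm => ?_)
  · ext x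
    exact key s _ x (Classical.choose_spec (hP π hre (x ≫ π)))
  · ext v
    obtain ⟨x, hx⟩ : ∃ x : P ⟶ X, x ≫ π = v := ⟨_, Classical.choose_spec (hP π hre v)⟩
    have := ConcreteCategory.congr_hom hm x
    simp only [Cofork.π_ofπ] at this
    rw [← hx]
    exact this.trans (key s _ _ (Classical.choose_spec (hP π hre (x ≫ π)))).symm

lemma coyonedaPreservesHelper {R X W P : E}
    (f g : R ⟶ X) (π : X ⟶ W) (hre : Nonempty (RegularEpi π)) (hP : RegProjective P)
    (hrel : ∀ x y : P ⟶ X, x ≫ π = y ≫ π → ∃ z : P ⟶ R, z ≫ f = x ∧ z ≫ g = y)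
    (w : f ≫ π = g ≫ π) (hc : IsColimit (Cofork.ofπ π w)) :
    PreservesColimit (parallelPair f g) (coyoneda.obj (op P)) := by
  apply preservesColimit_of_preserves_colimit_cocone hc
  exact (isColimitMapCoconeCoforkEquiv (coyoneda.obj (op P)) w).symm
    (coyonedaCoforkIsColimit f g π hre hP hrel _)

/-- The restricted Yoneda functor preserves suitable coequalizers. -/
lemma ryPreservesHelper {R X W : E}
    (f g : R ⟶ X) (π : X ⟶ W) (hre : Nonempty (RegularEpi π))
    (hrel : ∀ (P : E), RegProjective P →
      ∀ x y : P ⟶ X, x ≫ π = y ≫ π → ∃ z : P ⟶ R, z ≫ f = x ∧ z ≫ g = y)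
    (w : f ≫ π = g ≫ π) (hc : IsColimit (Cofork.ofπ π w)) :
    PreservesColimit (parallelPair f g) (restrictedYoneda E) := by
  apply preservesColimit_of_preserves_colimit_cocone hc
  apply evaluationJointlyReflectsColimits
  intro k
  haveI : PreservesColimit (parallelPair f g) (coyoneda.obj (op k.unop.obj)) :=
    coyonedaPreservesHelper f g π hre k.unop.property (hrel _ k.unop.property) w hc
  haveI : PreservesColimit (parallelPair f g)
      (restrictedYoneda E ⋙ (evaluation _ _).obj k) :=
    preservesColimit_of_natIso _
      (NatIso.ofComponents (fun X => Iso.refl _) (fun {_ _} u => rfl) :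
        coyoneda.obj (op k.unop.obj) ≅ restrictedYoneda E ⋙ (evaluation _ _).obj k)
  exact isColimitOfPreserves (restrictedYoneda E ⋙ (evaluation _ _).obj k) hc

lemma pseudoCoeqTransport {C : Type w} [Category.{v} C] {A B A' B' T : C}
    (eA : A ≅ A') (eB : B ≅ B') (f g : A ⟶ B) (hfg : IsPseudoEqRel f g) (π : B ⟶ T)
    (w : f ≫ π = g ≫ π) (hc : Nonempty (IsColimit (Cofork.ofπ π w))) :
    ∃ (f' g' : A' ⟶ B'), IsPseudoEqRel f' g' ∧
      ∃ (π' : B' ⟶ T) (w' : f' ≫ π' = g' ≫ π'), Nonempty (IsColimit (Cofork.ofπ π' w')) := by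
  obtain ⟨S, q, h, k, ⟨rq⟩, hf, hg, Z, m, ⟨rm⟩, kp⟩ := hfg
  obtain ⟨hc⟩ := hc
  refine ⟨eA.inv ≫ f ≫ eB.hom, eA.inv ≫ g ≫ eB.hom,
    ⟨S, eA.inv ≫ q, h ≫ eB.hom, k ≫ eB.hom,
      ⟨RegularEpi.ofArrowIso (Arrow.isoMk eA (Iso.refl _) (by simp)) rq⟩,
      by simp [hf], by simp [hg], Z, eB.inv ≫ m,
      ⟨RegularEpi.ofArrowIso (Arrow.isoMk eB (Iso.refl _) (by simp)) rm⟩,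
      kp.of_iso (Iso.refl _) eB eB (Iso.refl _) (by simp) (by simp) (by simp) (by simp)⟩,
    eB.inv ≫ π, by simp [w], ⟨?_⟩⟩
  exact Cofork.isColimitOfIsos _ hc _ eA eB (Iso.refl _) (by simp) (by simp) (by simp)

end Statement19Aux

/-- for a small regular category `E` with enough regular projectives, the
restricted Yoneda functor `E ⥤ [E_Pᵒᵖ, Set]` is fully faithful, preserves finite limits
and coequalizers of kernel pairs, and lands in the presheaves that are coequalizers of
pseudo equivalence relations of representables; in particular every object of `E` is a
coequalizer of a pseudo equivalence relation of projectives. -/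
theorem statement19 (E : Type u) [SmallCategory E] [HasFiniteLimits E]
    (hco : ∀ {R X : E} (f g : R ⟶ X),
      (∃ (Z : E) (m : X ⟶ Z), IsKernelPair m f g) → HasCoequalizer f g)
    (hstab : ∀ {X Y Z : E} (e : X ⟶ Y) (g : Z ⟶ Y), Nonempty (RegularEpi e) →
      Nonempty (RegularEpi (pullback.snd e g)))
    (hep : EnoughRegProjectives E) :
    (restrictedYoneda E).Full ∧ (restrictedYoneda E).Faithful ∧
    PreservesFiniteLimits (restrictedYoneda E) ∧
    (∀ {R X : E} (f g : R ⟶ X), (∃ (Z : E) (m : X ⟶ Z), IsKernelPair m f g) →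
      PreservesColimit (parallelPair f g) (restrictedYoneda E)) ∧
    (∀ X : E, ∃ (P Q : ObjectProperty.FullSubcategory (RegProjective (E := E)))
        (f g : yoneda.obj P ⟶ yoneda.obj Q), IsPseudoEqRel f g ∧
        ∃ (π : yoneda.obj Q ⟶ (restrictedYoneda E).obj X) (w : f ≫ π = g ≫ π),
          Nonempty (IsColimit (Cofork.ofπ π w))) ∧
    (∀ X : E, ∃ (P Q : E) (hP : RegProjective P) (hQ : RegProjective Q)
        (f g : P ⟶ Q), IsPseudoEqRel f g ∧
        ∃ (π : Q ⟶ X) (w : f ≫ π = g ≫ π), Nonempty (IsColimit (Cofork.ofπ π w))) := by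
  classical
  set ry := restrictedYoneda E with hry
  -- basic: kernel pair relation lifting
  have hrel_kp : ∀ {R X W : E} (f g : R ⟶ X) (π : X ⟶ W), IsKernelPair π f g →
      ∀ (P : E), RegProjective P →
        ∀ x y : P ⟶ X, x ≫ π = y ≫ π → ∃ z : P ⟶ R, z ≫ f = x ∧ z ≫ g = y := by
    intro R X W f g π kp P hP x y hxy
    obtain ⟨z, hz1, hz2⟩ := kp.lift' x y hxy
    exact ⟨z, hz1, hz2⟩
  -- conjunct 4 generalized
  have pres : ∀ {R X : E} (f g : R ⟶ X), (∃ (Z : E) (m : X ⟶ Z), IsKernelPair m f g) →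
      PreservesColimit (parallelPair f g) ry := by
    intro R X f g hk
    obtain ⟨Z, m, hkp⟩ := hk
    haveI : HasCoequalizer f g := hco f g ⟨Z, m, hkp⟩
    haveI re : RegularEpi (coequalizer.π f g) :=
      { W := R, left := f, right := g, w := coequalizer.condition f g,
        isColimit := coequalizerIsCoequalizer f g }
    have kp_e : IsKernelPair (coequalizer.π f g) f g := by
      refine IsKernelPair.cancel_right (coequalizer.condition f g)
        (f₂ := coequalizer.desc m hkp.w) ?_
      rwa [coequalizer.π_desc]
    exact ryPreservesHelper f g (coequalizer.π f g) ⟨re⟩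
      (hrel_kp f g _ kp_e) kp_e.w (kp_e.toCoequalizer re)
  -- regular epis are mapped to regular epis
  have regmap : ∀ {A B : E} (u : A ⟶ B), RegularEpi u → RegularEpi (ry.map u) := by
    intro A B u ru
    haveI := ru
    have kp : IsKernelPair u (pullback.fst u u) (pullback.snd u u) :=
      IsPullback.of_hasPullback u u
    haveI := pres (pullback.fst u u) (pullback.snd u u) ⟨B, u, kp⟩
    exact
      { W := _, left := ry.map (pullback.fst u u), right := ry.map (pullback.snd u u),
        w := by rw [← ry.map_comp, ← ry.map_comp, kp.w],
        isColimit := isColimitCoforkMapOfIsColimit ry kp.w (kp.toCoequalizer ru) }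
  -- faithful
  have faithful : ry.Faithful := by
    refine ⟨fun {X Y f g} h => ?_⟩
    obtain ⟨P, p, hP, ⟨rp⟩⟩ := hep X
    haveI := RegularEpi.epi p rp
    have := congrFun (congrArg (fun τ => τ.app (op (⟨P, hP⟩ :
      ObjectProperty.FullSubcategory (RegProjective (E := E))))) h) p
    simp only [hry, restrictedYoneda] at this
    exact (cancel_epi p).1 this
  -- full
  have full : ry.Full := by
    refine ⟨fun {X Y} τ => ?_⟩
    obtain ⟨P, p, hP, ⟨rp⟩⟩ := hep X
    haveI := rp
    set Ph : ObjectProperty.FullSubcategory (RegProjective (E := E)) := ⟨P, hP⟩ with hPh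
    have kp : IsKernelPair p (pullback.fst p p) (pullback.snd p p) :=
      IsPullback.of_hasPullback p p
    obtain ⟨Q, q, hQ, ⟨rq⟩⟩ := hep (pullback p p)
    haveI := RegularEpi.epi q rq
    set f₀ : P ⟶ Y := τ.app (op Ph) p with hf₀
    have nat : ∀ (R : ObjectProperty.FullSubcategory (RegProjective (E := E))) (u : R.obj ⟶ P),
        τ.app (op R) (u ≫ p) = u ≫ f₀ := by
      intro R u
      exact ConcreteCategory.congr_hom (τ.naturality (Quiver.Hom.op (X := R) (Y := Ph) (ObjectProperty.homMk u))) p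
    have weq : pullback.fst p p ≫ f₀ = pullback.snd p p ≫ f₀ := by
      refine (cancel_epi q).1 ?_
      have h1 := nat ⟨Q, hQ⟩ (q ≫ pullback.fst p p)
      have h2 := nat ⟨Q, hQ⟩ (q ≫ pullback.snd p p)
      rw [← Category.assoc, ← Category.assoc, ← h1, ← h2, Category.assoc,
        Category.assoc, kp.w]
    have hcoeq := kp.toCoequalizer rp
    let m : X ⟶ Y := Cofork.IsColimit.desc hcoeq f₀ weq
    have hm : p ≫ m = f₀ := Cofork.IsColimit.π_desc' hcoeq f₀ weq
    refine ⟨m, ?_⟩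
    ext R x
    obtain ⟨x', hx'⟩ := R.unop.property p ⟨rp⟩ x
    have hτ : τ.app R x = x ≫ m := by
      rw [← hx', nat R.unop x', ← hm, ← Category.assoc]
    exact hτ.symm
  -- preserves finite limits
  have finlim : PreservesFiniteLimits ry := by
    haveI h : PreservesLimitsOfSize.{0, 0} (restrictedYoneda E) := by
      unfold restrictedYoneda
      infer_instance
    exact PreservesLimitsOfSize.preservesFiniteLimits ry
  refine ⟨full, faithful, finlim, fun {R X} f g hk => pres f g hk, ?_, ?_⟩
  · -- presheaf-level pseudo equivalence relation
    intro X
    obtain ⟨P₁, p, hP₁, ⟨rp⟩⟩ := hep X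
    haveI := rp
    have kp : IsKernelPair p (pullback.fst p p) (pullback.snd p p) :=
      IsPullback.of_hasPullback p p
    obtain ⟨Q₀, q, hQ₀, ⟨rq⟩⟩ := hep (pullback p p)
    haveI := RegularEpi.epi q rq
    have eIso : ∀ (Z : E) (hZ : RegProjective Z), ry.obj Z ≅
        yoneda.obj (⟨Z, hZ⟩ : ObjectProperty.FullSubcategory (RegProjective (E := E))) :=
      fun Z hZ => NatIso.ofComponents (fun R =>
        { hom := TypeCat.ofHom (fun x => ObjectProperty.homMk x)
          inv := TypeCat.ofHom (fun x => x.hom) }) (by intros; rfl)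
    refine ⟨⟨Q₀, hQ₀⟩, ⟨P₁, hP₁⟩, pseudoCoeqTransport (eIso Q₀ hQ₀) (eIso P₁ hP₁)
      (ry.map (q ≫ pullback.fst p p)) (ry.map (q ≫ pullback.snd p p))
      ⟨ry.obj (pullback p p), ry.map q, ry.map (pullback.fst p p), ry.map (pullback.snd p p),
        ⟨regmap q rq⟩, by rw [ry.map_comp], by rw [ry.map_comp],
        ry.obj X, ry.map p, ⟨regmap p rp⟩, kp.map ry⟩
      (ry.map p) ?_ ?_⟩
    · rw [← ry.map_comp, ← ry.map_comp]
      congr 1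
      rw [Category.assoc, Category.assoc, kp.w]
    · -- colimit cofork
      have wE : (q ≫ pullback.fst p p) ≫ p = (q ≫ pullback.snd p p) ≫ p := by
        rw [Category.assoc, Category.assoc, kp.w]
      have hcE : IsColimit (Cofork.ofπ p wE) := isCoequalizerEpiComp (kp.toCoequalizer rp) q
      have hrel : ∀ (P : E), RegProjective P →
          ∀ x y : P ⟶ P₁, x ≫ p = y ≫ p →
            ∃ z : P ⟶ Q₀, z ≫ (q ≫ pullback.fst p p) = x ∧ z ≫ (q ≫ pullback.snd p p) = y := by
        intro P hP x y hxy
        obtain ⟨z, hz1, hz2⟩ := kp.lift' x y hxy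
        obtain ⟨z', hz'⟩ := hP q ⟨rq⟩ z
        exact ⟨z', by rw [← Category.assoc, hz', hz1], by rw [← Category.assoc, hz', hz2]⟩
      haveI := ryPreservesHelper _ _ p ⟨rp⟩ hrel wE hcE
      exact ⟨isColimitCoforkMapOfIsColimit ry wE hcE⟩
  · -- object-level pseudo equivalence relation
    intro X
    obtain ⟨P₁, p, hP₁, ⟨rp⟩⟩ := hep X
    haveI := rp
    have kp : IsKernelPair p (pullback.fst p p) (pullback.snd p p) :=
      IsPullback.of_hasPullback p p
    obtain ⟨Q₀, q, hQ₀, ⟨rq⟩⟩ := hep (pullback p p)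
    haveI := RegularEpi.epi q rq
    have wE : (q ≫ pullback.fst p p) ≫ p = (q ≫ pullback.snd p p) ≫ p := by
      rw [Category.assoc, Category.assoc, kp.w]
    exact ⟨Q₀, P₁, hQ₀, hP₁, q ≫ pullback.fst p p, q ≫ pullback.snd p p,
      ⟨pullback p p, q, pullback.fst p p, pullback.snd p p, ⟨rq⟩, rfl, rfl,
        X, p, ⟨rp⟩, kp⟩,
      p, wE, ⟨isCoequalizerEpiComp (kp.toCoequalizer rp) q⟩⟩


end Paper
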